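/- Let X be a finite topological space. Every projective object in the category of abelian data on X is coflasque; in fact, for every projective abelian data P and every closed subset C ⊆ X, the natural map L(C,P) → L(X,P) is injective. -/

import Mathlib

open CategoryTheory Topology CategoryTheory.Limits

/-! Core definitions: abelian data on a finite topological space. -/

abbrev AbData (X : Type) [TopologicalSpace X] : Type 1 := Specialization X ⥤ AddCommGrpCat.{0}
abbrev pt {X : Type} [TopologicalSpace X] (x : X) : Specialization X := Specialization.toEquiv x

section core
variable {X : Type} [TopologicalSpace X]
abbrev stalk (F : AbData X) (x : X) : Type := F.obj (pt x)

lemma naturality_apply {F G : AbData X} (φ : F ⟶ G) {p q : Specialization X} (h : p ⟶ q)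
    (a : F.obj p) : G.map h (φ.app p a) = φ.app q (F.map h a) := by
  have := congrArg (fun (f : F.obj p ⟶ G.obj q) => f a) (φ.naturality h)
  simp only [CategoryTheory.comp_apply] at this
  exact this.symm

/-- Compatible families: the sections of an abelian data over the whole space. -/
def compatSections (F : AbData X) : AddSubgroup (∀ x : X, F.obj (pt x)) where
  carrier := {u | ∀ (x y : X) (h : pt x ≤ pt y), F.map (homOfLE h) (u x) = u y}
  zero_mem' := by intro x y h; simp
  add_mem' := by intro u v hu hv x y h; simp [map_add, hu x y h, hv x y h]
  neg_mem' := by intro u hu x y h; simp [hu x y h]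

/-- The sections functor `Γ(X,-)`. -/
noncomputable def secFunctor (X : Type) [TopologicalSpace X] : AbData X ⥤ AddCommGrpCat.{0} where
  obj F := AddCommGrpCat.of (compatSections F)
  map {F G} φ := AddCommGrpCat.ofHom
    { toFun := fun u => ⟨fun x => φ.app (pt x) (u.1 x), by
        intro x y h
        rw [naturality_apply φ (homOfLE h) (u.1 x), u.2 x y h]⟩
      map_zero' := by apply Subtype.ext; funext x; simp
      map_add' := by intro u v; apply Subtype.ext; funext x; simp }
  map_id := by intro F; apply AddCommGrpCat.ext; intro u; rfl
  map_comp := by intro F G H φ ψ; apply AddCommGrpCat.ext; intro u; rfl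

instance (X : Type) [TopologicalSpace X] : (secFunctor X).Additive where
  map_add := by
    intro F G φ ψ
    apply AddCommGrpCat.ext; intro u; apply Subtype.ext; funext x
    simp [secFunctor, AddMonoidHom.add_apply]
    rfl

noncomputable def cosecOf (F : AbData X) (x : X) : stalk F x →+ DirectSum X (stalk F) :=
  letI := Classical.decEq X
  DirectSum.of (stalk F) x

/-- The relations defining cosections (the colimit presentation). -/
noncomputable def cosecRel (F : AbData X) : AddSubgroup (DirectSum X (stalk F)) :=
  AddSubgroup.closure {w | ∃ (x y : X) (h : pt x ≤ pt y) (a : stalk F x),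
    w = cosecOf F y (F.map (homOfLE h) a) - cosecOf F x a}

/-- Cosections of `F` over the whole space: `L(X,F)`, presented as the quotient of the direct
sum `⊕ₓ F_x` by the relations `r_{xy}(a) - a`. -/
noncomputable def cosecGrp (F : AbData X) : AddCommGrpCat.{0} :=
  AddCommGrpCat.of (DirectSum X (stalk F) ⧸ cosecRel F)

noncomputable def cosecMk (F : AbData X) (x : X) : stalk F x →+ cosecGrp F :=
  (QuotientAddGroup.mk' (cosecRel F)).comp (cosecOf F x)

lemma cosecHom_ext {F : AbData X} {H : Type} [AddCommGroup H] {f g : cosecGrp F →+ H}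
    (h : ∀ (x : X) (a : stalk F x), f (cosecMk F x a) = g (cosecMk F x a)) : f = g := by
  letI := Classical.decEq X
  exact QuotientAddGroup.addMonoidHom_ext _ (DirectSum.addHom_ext fun x a => h x a)

noncomputable def cosecMapAux {F G : AbData X} (φ : F ⟶ G) :
    DirectSum X (stalk F) →+ cosecGrp G :=
  letI := Classical.decEq X
  DirectSum.toAddMonoid (fun x => (cosecMk G x).comp (φ.app (pt x)).hom)

lemma cosecMapAux_of {F G : AbData X} (φ : F ⟶ G) (x : X) (a : stalk F x) :
    cosecMapAux φ (cosecOf F x a) = cosecMk G x (φ.app (pt x) a) := by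
  letI := Classical.decEq X
  simp [cosecMapAux, cosecOf, DirectSum.toAddMonoid_of]

lemma cosecRel_le_ker {F G : AbData X} (φ : F ⟶ G) : cosecRel F ≤ (cosecMapAux φ).ker := by
  rw [cosecRel, AddSubgroup.closure_le]
  rintro w ⟨x, y, h, a, rfl⟩
  have : (cosecMapAux φ) (cosecOf F y ((F.map (homOfLE h)) a) - cosecOf F x a) = 0 := by
    rw [map_sub, cosecMapAux_of, cosecMapAux_of, ← naturality_apply φ (homOfLE h) a]
    show (QuotientAddGroup.mk' (cosecRel G)) (cosecOf G y (G.map (homOfLE h) (φ.app (pt x) a)))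
      - (QuotientAddGroup.mk' (cosecRel G)) (cosecOf G x (φ.app (pt x) a)) = 0
    rw [← map_sub]
    exact (QuotientAddGroup.eq_zero_iff _).mpr
      (AddSubgroup.subset_closure ⟨x, y, h, φ.app (pt x) a, rfl⟩)
  exact this

noncomputable def cosecMap {F G : AbData X} (φ : F ⟶ G) : cosecGrp F →+ cosecGrp G :=
  QuotientAddGroup.lift (cosecRel F) (cosecMapAux φ) (cosecRel_le_ker φ)

lemma cosecMap_mk {F G : AbData X} (φ : F ⟶ G) (x : X) (a : stalk F x) :
    cosecMap φ (cosecMk F x a) = cosecMk G x (φ.app (pt x) a) := cosecMapAux_of φ x a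

/-- The cosections functor `L(X,-)`. -/
noncomputable def cosecFunctor (X : Type) [TopologicalSpace X] : AbData X ⥤ AddCommGrpCat.{0} where
  obj F := cosecGrp F
  map φ := AddCommGrpCat.ofHom (cosecMap φ)
  map_id F := by
    refine AddCommGrpCat.hom_ext (cosecHom_ext fun x a => ?_)
    exact cosecMap_mk (𝟙 F) x a
  map_comp φ ψ := by
    refine AddCommGrpCat.hom_ext (cosecHom_ext fun x a => ?_)
    show cosecMap (φ ≫ ψ) (cosecMk _ x a) = cosecMap ψ (cosecMap φ (cosecMk _ x a))
    rw [cosecMap_mk, cosecMap_mk, cosecMap_mk]; rfl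

instance (X : Type) [TopologicalSpace X] : (cosecFunctor X).Additive where
  map_add := by
    intro F G φ ψ
    refine AddCommGrpCat.hom_ext (cosecHom_ext fun x a => ?_)
    show cosecMap (φ + ψ) (cosecMk F x a) = (cosecMap φ + cosecMap ψ) (cosecMk F x a)
    rw [AddMonoidHom.add_apply, cosecMap_mk, cosecMap_mk, cosecMap_mk]
    show cosecMk G x ((φ.app (pt x) + ψ.app (pt x)) a) = _
    rw [AddCommGrpCat.hom_add_apply, map_add]
end core

section restriction
variable {X : Type} [TopologicalSpace X]

/-- The inclusion of a subspace, as a functor between specialization preorders. -/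
def inc (S : Set X) : Specialization ↥S ⥤ Specialization X :=
  (Specialization.map ⟨(Subtype.val : S → X), continuous_subtype_val⟩).monotone.functor

/-- Restriction of abelian data to a subspace. -/
def restr (S : Set X) : AbData X ⥤ AbData ↥S := (Functor.whiskeringLeft _ _ _).obj (inc S)

lemma subtype_pt_le_iff {S : Set X} (a b : ↥S) : pt a ≤ pt b ↔ pt (a : X) ≤ pt (b : X) := by
  rw [Specialization.toEquiv_le_toEquiv, Specialization.toEquiv_le_toEquiv]
  exact (subtype_specializes_iff b a).trans Iff.rfl

lemma data_map_eq (F : AbData X) {p q : Specialization X} (h h' : p ⟶ q) : F.map h = F.map h' := by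
  congr 1
  apply Subsingleton.elim

/-- Sections of `F` over the subspace `S`: `Γ(S,F)`. -/
noncomputable def secGrpOn (S : Set X) (F : AbData X) : AddCommGrpCat.{0} :=
  (secFunctor ↥S).obj ((restr S).obj F)

/-- Cosections of `F` over the subspace `S`: `L(S,F)`. -/
noncomputable def cosecGrpOn (S : Set X) (F : AbData X) : AddCommGrpCat.{0} :=
  (cosecFunctor ↥S).obj ((restr S).obj F)

/-- Restriction of sections along an inclusion of subspaces `T ⊆ S`. -/
noncomputable def secResOn (F : AbData X) {S T : Set X} (hTS : T ⊆ S) :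
    secGrpOn S F →+ secGrpOn T F where
  toFun u := (⟨fun x => u.1 ⟨x.1, hTS x.2⟩, by
    intro x y h
    have hS : pt (⟨x.1, hTS x.2⟩ : ↥S) ≤ pt (⟨y.1, hTS y.2⟩ : ↥S) := by
      rw [subtype_pt_le_iff]
      exact (subtype_pt_le_iff x y).mp h
    have hu := u.2 ⟨x.1, hTS x.2⟩ ⟨y.1, hTS y.2⟩ hS
    have heq : ((restr T).obj F).map (homOfLE h) = ((restr S).obj F).map (homOfLE hS) :=
      data_map_eq F _ _
    rw [heq]
    exact hu⟩ : compatSections ((restr T).obj F))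
  map_zero' := rfl
  map_add' u v := rfl

noncomputable def cosecExtAux (F : AbData X) {S T : Set X} (hST : S ⊆ T) :
    DirectSum ↥S (stalk ((restr S).obj F)) →+ cosecGrp ((restr T).obj F) :=
  letI := Classical.decEq ↥S
  DirectSum.toAddMonoid (fun x => cosecMk ((restr T).obj F) ⟨x.1, hST x.2⟩)

lemma cosecExtAux_of (F : AbData X) {S T : Set X} (hST : S ⊆ T) (x : ↥S)
    (a : stalk ((restr S).obj F) x) :
    cosecExtAux F hST (cosecOf ((restr S).obj F) x a)
      = cosecMk ((restr T).obj F) ⟨x.1, hST x.2⟩ a := by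
  letI := Classical.decEq ↥S
  simp only [cosecExtAux, cosecOf, DirectSum.toAddMonoid_of]
  erw [DirectSum.toAddMonoid_of]
  rfl

/-- Extension of cosections along an inclusion of subspaces `S ⊆ T`. -/
noncomputable def cosecExtOn (F : AbData X) {S T : Set X} (hST : S ⊆ T) :
    cosecGrp ((restr S).obj F) →+ cosecGrp ((restr T).obj F) := by
  refine QuotientAddGroup.lift _ (cosecExtAux F hST) ?_
  rw [cosecRel, AddSubgroup.closure_le]
  rintro w ⟨x, y, h, a, rfl⟩
  have hT : pt (⟨x.1, hST x.2⟩ : ↥T) ≤ pt (⟨y.1, hST y.2⟩ : ↥T) := by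
    rw [subtype_pt_le_iff]; exact (subtype_pt_le_iff x y).mp h
  have heq : ((restr S).obj F).map (homOfLE h) = ((restr T).obj F).map (homOfLE hT) :=
    data_map_eq F _ _
  rw [SetLike.mem_coe, AddMonoidHom.mem_ker, map_sub, heq, cosecExtAux_of, cosecExtAux_of]
  show QuotientAddGroup.mk' (cosecRel _) (_ - _) = 0
  exact (QuotientAddGroup.eq_zero_iff _).mpr
    (AddSubgroup.subset_closure ⟨⟨x.1, hST x.2⟩, ⟨y.1, hST y.2⟩, hT, a, rfl⟩)

lemma cosecExtOn_mk (F : AbData X) {S T : Set X} (hST : S ⊆ T) (x : ↥S)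
    (a : stalk ((restr S).obj F) x) :
    cosecExtOn F hST (cosecMk ((restr S).obj F) x a)
      = cosecMk ((restr T).obj F) ⟨x.1, hST x.2⟩ a := cosecExtAux_of F hST x a

end restriction

section spaces
variable {X : Type} [TopologicalSpace X]

/-- The minimal open subset containing a point (of a finite space). -/
def minOpen (x : X) : Set X := ⋂₀ {U : Set X | IsOpen U ∧ x ∈ U}

lemma isOpen_minOpen [Finite X] (x : X) : IsOpen (minOpen x) :=
  Set.Finite.isOpen_sInter (Set.toFinite _) (fun _ hU => hU.1)

lemma mem_minOpen_self (x : X) : x ∈ minOpen x := fun _ hU => hU.2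

lemma mem_minOpen_iff {x z : X} : z ∈ minOpen x ↔ pt x ≤ pt z := by
  rw [Specialization.toEquiv_le_toEquiv, specializes_iff_forall_open]
  constructor
  · intro hz s hs hx
    exact hz s ⟨hs, hx⟩
  · intro h U hU
    exact h U hU.1 hU.2

lemma mem_closure_iff_pt_le {x z : X} : z ∈ closure ({x} : Set X) ↔ pt z ≤ pt x := by
  rw [Specialization.toEquiv_le_toEquiv, specializes_iff_mem_closure]

lemma minOpen_anti {y y' : X} (h : pt y ≤ pt y') : minOpen y' ⊆ minOpen y := by
  intro z hz
  rw [mem_minOpen_iff] at hz ⊢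
  exact le_trans h hz

lemma closure_singleton_mono {y y' : X} (h : pt y ≤ pt y') :
    closure ({y} : Set X) ⊆ closure ({y'} : Set X) := by
  intro z hz
  rw [mem_closure_iff_pt_le] at hz ⊢
  exact le_trans hz h
end spaces

section directimages
variable {X Y : Type} [TopologicalSpace X] [TopologicalSpace Y]

/-- Restriction of global sections to sections over a subspace. -/
noncomputable def secResToSub (F : AbData X) (S : Set X) :
    (secFunctor X).obj F →+ secGrpOn S F where
  toFun u := (⟨fun x => u.1 x.1, by
    intro x y h
    have hX : pt (x : X) ≤ pt (y : X) := (subtype_pt_le_iff x y).mp h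
    have hu := u.2 x.1 y.1 hX
    have heq : ((restr S).obj F).map (homOfLE h) = F.map (homOfLE hX) := data_map_eq F _ _
    rw [heq]
    exact hu⟩ : compatSections ((restr S).obj F))
  map_zero' := rfl
  map_add' u v := rfl

noncomputable def cosecFromSubAux (F : AbData X) (S : Set X) :
    DirectSum ↥S (stalk ((restr S).obj F)) →+ cosecGrp F :=
  letI := Classical.decEq ↥S
  DirectSum.toAddMonoid (fun x => cosecMk F x.1)

lemma cosecFromSubAux_of (F : AbData X) (S : Set X) (x : ↥S)
    (a : stalk ((restr S).obj F) x) :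
    cosecFromSubAux F S (cosecOf ((restr S).obj F) x a) = cosecMk F x.1 a := by
  letI := Classical.decEq ↥S
  simp only [cosecFromSubAux, cosecOf, DirectSum.toAddMonoid_of]
  erw [DirectSum.toAddMonoid_of]
  rfl

/-- Extension of cosections over a subspace to global cosections. -/
noncomputable def cosecExtFromSub (F : AbData X) (S : Set X) :
    cosecGrp ((restr S).obj F) →+ cosecGrp F := by
  refine QuotientAddGroup.lift _ (cosecFromSubAux F S) ?_
  rw [cosecRel, AddSubgroup.closure_le]
  rintro w ⟨x, y, h, a, rfl⟩
  have hX : pt (x : X) ≤ pt (y : X) := (subtype_pt_le_iff x y).mp h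
  have heq : ((restr S).obj F).map (homOfLE h) = F.map (homOfLE hX) := data_map_eq F _ _
  rw [SetLike.mem_coe, AddMonoidHom.mem_ker, map_sub, heq, cosecFromSubAux_of,
    cosecFromSubAux_of]
  show QuotientAddGroup.mk' (cosecRel _) (_ - _) = 0
  exact (QuotientAddGroup.eq_zero_iff _).mpr
    (AddSubgroup.subset_closure ⟨x.1, y.1, hX, a, rfl⟩)

lemma cosecExtFromSub_mk (F : AbData X) (S : Set X) (x : ↥S)
    (a : stalk ((restr S).obj F) x) :
    cosecExtFromSub F S (cosecMk ((restr S).obj F) x a) = cosecMk F x.1 a :=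
  cosecFromSubAux_of F S x a

/-- An abelian data is flasque if all restrictions to open subsets are surjective. -/
def Flasque (F : AbData X) : Prop :=
  ∀ U : Set X, IsOpen U → Function.Surjective (secResToSub F U)

/-- An abelian data is coflasque if all extensions from closed subsets are injective. -/
def Coflasque (F : AbData X) : Prop :=
  ∀ C : Set X, IsClosed C → Function.Injective (cosecExtFromSub F C)

/-- The inverse image functor `f⁻¹`. -/
def invIm (f : C(X, Y)) : AbData Y ⥤ AbData X :=
  (Functor.whiskeringLeft _ _ _).obj (Specialization.map f).monotone.functor

/-- The direct image functor `f_*`, defined stalkwise by `(f_* F)_y = Γ(f⁻¹(U_y), F)`. -/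
noncomputable def pushforward (f : C(X, Y)) : AbData X ⥤ AbData Y where
  obj F :=
    { obj := fun y => secGrpOn (f ⁻¹' minOpen (Specialization.ofEquiv y)) F
      map := fun {y y'} h => AddCommGrpCat.ofHom <| secResOn F (Set.preimage_mono (minOpen_anti (leOfHom h)))
      map_id := fun y => by apply AddCommGrpCat.ext; intro u; apply Subtype.ext; rfl
      map_comp := fun h1 h2 => by apply AddCommGrpCat.ext; intro u; apply Subtype.ext; rfl }
  map {F G} φ :=
    { app := fun y => (secFunctor _).map ((restr _).map φ)
      naturality := fun y y' h => by apply AddCommGrpCat.ext; intro u; apply Subtype.ext; rfl }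
  map_id F := by
    apply NatTrans.ext; funext y; apply AddCommGrpCat.ext; intro u; apply Subtype.ext; rfl
  map_comp φ ψ := by
    apply NatTrans.ext; funext y; apply AddCommGrpCat.ext; intro u; apply Subtype.ext; rfl

lemma cosecExtOn_refl (F : AbData X) {S : Set X} (h : S ⊆ S) :
    cosecExtOn F h = AddMonoidHom.id (cosecGrp ((restr S).obj F)) := by
  refine cosecHom_ext fun x a => ?_
  rw [cosecExtOn_mk]
  rfl

lemma cosecExtOn_trans (F : AbData X) {S T V : Set X} (h1 : S ⊆ T) (h2 : T ⊆ V)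
    (h3 : S ⊆ V) :
    cosecExtOn F h3 = (cosecExtOn F h2).comp (cosecExtOn F h1) := by
  refine cosecHom_ext fun x a => ?_
  rw [cosecExtOn_mk, AddMonoidHom.comp_apply, cosecExtOn_mk]
  exact (cosecExtOn_mk F h2 ⟨x.1, h1 x.2⟩ a).symm

lemma cosecExtOn_natural {F G : AbData X} (φ : F ⟶ G) {S T : Set X} (h : S ⊆ T) :
    (cosecMap ((restr T).map φ)).comp (cosecExtOn F h)
      = (cosecExtOn G h).comp (cosecMap ((restr S).map φ)) := by
  refine cosecHom_ext fun x a => ?_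
  rw [AddMonoidHom.comp_apply, AddMonoidHom.comp_apply, cosecExtOn_mk, cosecMap_mk]
  exact (cosecMap_mk ((restr T).map φ) ⟨x.1, h x.2⟩ a).trans (cosecExtOn_mk G h x _).symm

/-- The stalk of `f_! F`: cosections over `f⁻¹(C_y)`. -/
noncomputable def shriekObj (f : C(X, Y)) (F : AbData X) : AbData Y where
  obj y := cosecGrpOn (f ⁻¹' closure {Specialization.ofEquiv y}) F
  map {y y'} h := AddCommGrpCat.ofHom <| cosecExtOn F (Set.preimage_mono (closure_singleton_mono (leOfHom h)))
  map_id y := AddCommGrpCat.hom_ext (cosecExtOn_refl F _)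
  map_comp {y₁ y₂ y₃} h1 h2 := AddCommGrpCat.hom_ext (cosecExtOn_trans F _ _ _)

/-- The codirect image functor `f_!`, defined stalkwise by `(f_! F)_y = L(f⁻¹(C_y), F)`. -/
noncomputable def shriek (f : C(X, Y)) : AbData X ⥤ AbData Y where
  obj F := shriekObj f F
  map {F G} φ :=
    { app := fun y => (cosecFunctor _).map ((restr _).map φ)
      naturality := fun y y' h => AddCommGrpCat.hom_ext (cosecExtOn_natural φ _) }
  map_id F := by
    refine NatTrans.ext (funext fun y => ?_)
    show (cosecFunctor _).map ((restr _).map (𝟙 F)) = _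
    rw [CategoryTheory.Functor.map_id, CategoryTheory.Functor.map_id]
    rfl
  map_comp φ ψ := by
    refine NatTrans.ext (funext fun y => ?_)
    show (cosecFunctor _).map ((restr _).map (φ ≫ ψ)) = _
    rw [CategoryTheory.Functor.map_comp, CategoryTheory.Functor.map_comp]
    rfl
end directimages

instance pushforwardAdditive {X Y : Type} [TopologicalSpace X] [TopologicalSpace Y]
    (f : C(X, Y)) : (pushforward f).Additive where
  map_add := by
    intro F G φ ψ
    refine NatTrans.ext (funext fun y => ?_)
    apply AddCommGrpCat.ext; intro u; apply Subtype.ext; funext x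
    rfl

instance shriekAdditive {X Y : Type} [TopologicalSpace X] [TopologicalSpace Y]
    (f : C(X, Y)) : (shriek f).Additive where
  map_add := by
    intro F G φ ψ
    refine NatTrans.ext (funext fun y => ?_)
    refine AddCommGrpCat.hom_ext (cosecHom_ext fun x a => ?_)
    show cosecMap ((restr _).map (φ + ψ)) (cosecMk _ x a)
      = cosecMap ((restr _).map φ) (cosecMk _ x a) + cosecMap ((restr _).map ψ) (cosecMk _ x a)
    rw [cosecMap_mk, cosecMap_mk, cosecMap_mk]
    exact map_add _ _ _

section projproof
variable {X : Type} [TopologicalSpace X]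

lemma cosecMk_rel (F : AbData X) {x y : X} (h : pt x ≤ pt y) (a : stalk F x) :
    cosecMk F y (F.map (homOfLE h) a) = cosecMk F x a := by
  rw [← sub_eq_zero]
  show (QuotientAddGroup.mk' (cosecRel F)) _ - (QuotientAddGroup.mk' (cosecRel F)) _ = 0
  rw [← map_sub]
  exact (QuotientAddGroup.eq_zero_iff _).mpr
    (AddSubgroup.subset_closure ⟨x, y, h, a, rfl⟩)

lemma cosecExtFromSub_natural {F G : AbData X} (φ : F ⟶ G) (S : Set X) :
    (cosecMap φ).comp (cosecExtFromSub F S)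
      = (cosecExtFromSub G S).comp (cosecMap ((restr S).map φ)) := by
  refine cosecHom_ext fun x a => ?_
  rw [AddMonoidHom.comp_apply, AddMonoidHom.comp_apply, cosecExtFromSub_mk]
  exact (cosecMap_mk φ x.1 a).trans
    ((cosecExtFromSub_mk G S x _).symm.trans (congrArg _ (cosecMap_mk ((restr S).map φ) x a).symm))

/-- The stalk of the canonical cover of `P` at `p`: `⊕_{z ≤ p} P_z`. -/
noncomputable abbrev QStalk (P : AbData X) (p : Specialization X) : Type :=
  DirectSum {z : X // pt z ≤ p} (fun z => P.obj (pt z.1))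

noncomputable def QOf (P : AbData X) (p : Specialization X) (z : {z : X // pt z ≤ p}) :
    P.obj (pt z.1) →+ QStalk P p :=
  letI := Classical.decEq {z : X // pt z ≤ p}
  DirectSum.of (fun (w : {z : X // pt z ≤ p}) => P.obj (pt w.1)) z

noncomputable def QMap (P : AbData X) {p q : Specialization X} (h : p ≤ q) :
    QStalk P p →+ QStalk P q :=
  letI := Classical.decEq {z : X // pt z ≤ p}
  DirectSum.toAddMonoid (fun z => QOf P q ⟨z.1, le_trans z.2 h⟩)

lemma QMap_of (P : AbData X) {p q : Specialization X} (h : p ≤ q)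
    (z : {z : X // pt z ≤ p}) (a : P.obj (pt z.1)) :
    QMap P h (QOf P p z a) = QOf P q ⟨z.1, le_trans z.2 h⟩ a := by
  letI := Classical.decEq {z : X // pt z ≤ p}
  exact DirectSum.toAddMonoid_of (fun z => QOf P q ⟨z.1, le_trans z.2 h⟩) z a

/-- The canonical cover of `P`: `Q_p = ⊕_{z ≤ p} P_z` with transition maps the evident
re-indexing inclusions. -/
noncomputable def QData (P : AbData X) : AbData X where
  obj p := AddCommGrpCat.of (QStalk P p)
  map {p q} h := AddCommGrpCat.ofHom (QMap P (leOfHom h))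
  map_id p := by
    letI := Classical.decEq {z : X // pt z ≤ p}
    refine AddCommGrpCat.hom_ext (DirectSum.addHom_ext fun z a => ?_)
    show QMap P (le_refl p) (QOf P p z a) = QOf P p z a
    exact QMap_of P (le_refl p) z a
  map_comp {p q r} h1 h2 := by
    letI := Classical.decEq {z : X // pt z ≤ p}
    refine AddCommGrpCat.hom_ext (DirectSum.addHom_ext fun z a => ?_)
    show QMap P (le_trans (leOfHom h1) (leOfHom h2)) (QOf P p z a)
      = QMap P (leOfHom h2) (QMap P (leOfHom h1) (QOf P p z a))
    rw [QMap_of, QMap_of, QMap_of]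

lemma QData_map_of (P : AbData X) {p q : Specialization X} (h : p ⟶ q)
    (z : {z : X // pt z ≤ p}) (a : P.obj (pt z.1)) :
    (QData P).map h (QOf P p z a) = QOf P q ⟨z.1, le_trans z.2 (leOfHom h)⟩ a :=
  QMap_of P (leOfHom h) z a

noncomputable def epsApp (P : AbData X) (p : Specialization X) :
    (QData P).obj p →+ P.obj p :=
  letI := Classical.decEq {z : X // pt z ≤ p}
  DirectSum.toAddMonoid (fun z => (P.map (homOfLE z.2)).hom)

lemma epsApp_of (P : AbData X) (p : Specialization X) (z : {z : X // pt z ≤ p})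
    (a : P.obj (pt z.1)) : epsApp P p (QOf P p z a) = P.map (homOfLE z.2) a := by
  letI := Classical.decEq {z : X // pt z ≤ p}
  exact DirectSum.toAddMonoid_of (β := fun (w : {z : X // pt z ≤ p}) => P.obj (pt w.1))
    (fun w => (P.map (homOfLE w.2)).hom) z a

noncomputable def epsilon (P : AbData X) : QData P ⟶ P where
  app p := AddCommGrpCat.ofHom (epsApp P p)
  naturality {p q} h := by
    letI := Classical.decEq {z : X // pt z ≤ p}
    refine AddCommGrpCat.hom_ext (DirectSum.addHom_ext fun z a => ?_)
    show epsApp P q ((QData P).map h (QOf P p z a)) = P.map h (epsApp P p (QOf P p z a))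
    rw [QData_map_of, epsApp_of, epsApp_of]
    have : P.map (homOfLE z.2) ≫ P.map h = P.map (homOfLE (le_trans z.2 (leOfHom h))) := by
      rw [← P.map_comp]; exact data_map_eq P _ _
    exact (congrArg (fun f : P.obj (pt z.1) ⟶ P.obj q => f a) this).symm

lemma epsApp_surjective (P : AbData X) (p : Specialization X) :
    Function.Surjective ((epsilon P).app p) := by
  intro a
  refine ⟨QOf P p ⟨Specialization.ofEquiv p, le_refl p⟩ a, ?_⟩
  show epsApp P p _ = a
  refine (epsApp_of P p ⟨Specialization.ofEquiv p, le_refl p⟩ a).trans ?_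
  have : P.map (homOfLE (le_refl p)) = P.map (𝟙 p) := data_map_eq P _ _
  exact congrArg (fun f : P.obj p ⟶ P.obj p => f a) (this.trans (P.map_id p))

instance epsilon_epi (P : AbData X) : Epi (epsilon P) := by
  have : ∀ p, Epi ((epsilon P).app p) := fun p =>
    (AddCommGrpCat.epi_iff_surjective _).mpr (epsApp_surjective P p)
  exact NatTrans.epi_of_epi_app _

/-- The component of the retraction `ρ : L(X,Q) → L(S,Q)` at a stalk summand `P_z`. -/
noncomputable def rhoComp (P : AbData X) (S : Set X) (z : X) :
    P.obj (pt z) →+ cosecGrp ((restr S).obj (QData P)) :=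
  letI := Classical.dec (z ∈ S)
  if h : z ∈ S then
    (cosecMk ((restr S).obj (QData P)) ⟨z, h⟩).comp (QOf P (pt z) ⟨z, le_refl _⟩)
  else 0

lemma rhoComp_pos (P : AbData X) (S : Set X) {z : X} (h : z ∈ S) :
    rhoComp P S z
      = (cosecMk ((restr S).obj (QData P)) ⟨z, h⟩).comp (QOf P (pt z) ⟨z, le_refl _⟩) := by
  unfold rhoComp
  rw [dif_pos h]

noncomputable def rhoAt (P : AbData X) (S : Set X) (y : X) :
    stalk (QData P) y →+ cosecGrp ((restr S).obj (QData P)) :=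
  letI := Classical.decEq {z : X // pt z ≤ pt y}
  DirectSum.toAddMonoid (fun z : {z : X // pt z ≤ pt y} => rhoComp P S z.1)

lemma rhoAt_of (P : AbData X) (S : Set X) (y : X) (z : {z : X // pt z ≤ pt y})
    (a : P.obj (pt z.1)) :
    rhoAt P S y (QOf P (pt y) z a) = rhoComp P S z.1 a := by
  letI := Classical.decEq {z : X // pt z ≤ pt y}
  simp only [rhoAt, QOf]
  exact DirectSum.toAddMonoid_of (fun z : {z : X // pt z ≤ pt y} => rhoComp P S z.1) z a

noncomputable def rhoAux (P : AbData X) (S : Set X) :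
    DirectSum X (stalk (QData P)) →+ cosecGrp ((restr S).obj (QData P)) :=
  letI := Classical.decEq X
  DirectSum.toAddMonoid (fun y => rhoAt P S y)

lemma rhoAux_of (P : AbData X) (S : Set X) (y : X) (z : {z : X // pt z ≤ pt y})
    (a : P.obj (pt z.1)) :
    rhoAux P S (cosecOf (QData P) y (QOf P (pt y) z a)) = rhoComp P S z.1 a := by
  letI := Classical.decEq X
  have h1 : rhoAux P S (cosecOf (QData P) y (QOf P (pt y) z a))
      = rhoAt P S y (QOf P (pt y) z a) := by
    simp only [rhoAux, cosecOf, DirectSum.toAddMonoid_of]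
    exact DirectSum.toAddMonoid_of (fun y => rhoAt P S y) y _
  rw [h1, rhoAt_of]

/-- The retraction `ρ : L(X,Q) → L(S,Q)`. -/
noncomputable def rho (P : AbData X) (S : Set X) :
    cosecGrp (QData P) →+ cosecGrp ((restr S).obj (QData P)) := by
  refine QuotientAddGroup.lift _ (rhoAux P S) ?_
  rw [cosecRel, AddSubgroup.closure_le]
  rintro w ⟨x, y, h, a, rfl⟩
  rw [SetLike.mem_coe, AddMonoidHom.mem_ker, map_sub, sub_eq_zero]
  have : (rhoAux P S).comp ((cosecOf (QData P) y).comp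
        ((QData P).map (homOfLE h)).hom)
      = (rhoAux P S).comp (cosecOf (QData P) x) := by
    letI := Classical.decEq {z : X // pt z ≤ pt x}
    refine DirectSum.addHom_ext fun z b => ?_
    show rhoAux P S (cosecOf (QData P) y ((QData P).map (homOfLE h) (QOf P (pt x) z b)))
      = rhoAux P S (cosecOf (QData P) x (QOf P (pt x) z b))
    rw [QData_map_of, rhoAux_of, rhoAux_of]
  exact DFunLike.congr_fun this a

lemma rho_mk (P : AbData X) (S : Set X) (x : X) (w : stalk (QData P) x) :
    rho P S (cosecMk (QData P) x w) = rhoAux P S (cosecOf (QData P) x w) := rfl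

lemma rho_retraction (P : AbData X) {S : Set X} (hS : IsClosed S)
    (v : cosecGrp ((restr S).obj (QData P))) :
    rho P S (cosecExtFromSub (QData P) S v) = v := by
  have key : (rho P S).comp (cosecExtFromSub (QData P) S)
      = AddMonoidHom.id (cosecGrp ((restr S).obj (QData P))) := by
    refine cosecHom_ext fun x w => ?_
    rw [AddMonoidHom.comp_apply, cosecExtFromSub_mk]
    show rho P S (cosecMk (QData P) x.1 w) = cosecMk ((restr S).obj (QData P)) x w
    have : (rho P S).comp (cosecMk (QData P) x.1) = cosecMk ((restr S).obj (QData P)) x := by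
      letI := Classical.decEq {z : X // pt z ≤ pt x.1}
      refine DirectSum.addHom_ext fun z b => ?_
      show rho P S (cosecMk (QData P) x.1 (QOf P (pt x.1) z b))
        = cosecMk ((restr S).obj (QData P)) x (QOf P (pt x.1) z b)
      refine (rhoAux_of P S x.1 z b).trans ?_
      have hz : z.1 ∈ S :=
        hS.closure_subset_iff.mpr (Set.singleton_subset_iff.mpr x.2)
          (mem_closure_iff_pt_le.mpr z.2)
      rw [rhoComp_pos P S hz]
      show cosecMk ((restr S).obj (QData P)) ⟨z.1, hz⟩ (QOf P (pt z.1) ⟨z.1, le_refl _⟩ b) = _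
      have hle : pt (⟨z.1, hz⟩ : ↥S) ≤ pt x := (subtype_pt_le_iff _ _).mpr z.2
      have hrel := cosecMk_rel ((restr S).obj (QData P)) hle (QOf P (pt z.1) ⟨z.1, le_refl _⟩ b)
      have hmap : ((restr S).obj (QData P)).map (homOfLE hle) (QOf P (pt z.1) ⟨z.1, le_refl _⟩ b)
          = QOf P (pt x.1) z b := by
        have heq : ((restr S).obj (QData P)).map (homOfLE hle)
            = (QData P).map (homOfLE z.2) :=
          data_map_eq (QData P) ((inc S).map (homOfLE hle)) (homOfLE z.2)
        rw [heq]
        exact QData_map_of P (homOfLE z.2) ⟨z.1, le_refl _⟩ b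
      exact hrel.symm.trans
        (congrArg (fun t => cosecMk ((restr S).obj (QData P)) x t) hmap)
    exact DFunLike.congr_fun this w
  exact DFunLike.congr_fun key v

end projproof

open CategoryTheory in
/-- **Statement 18.** Every projective abelian data on a finite topological space is coflasque:
for every projective `P` and every closed subset `C ⊆ X`, the natural map `L(C,P) → L(X,P)`
is injective. -/
theorem statement18 {X : Type} [TopologicalSpace X] [Finite X] (P : AbData X)
    (hP : Projective P) :
    Coflasque P ∧ ∀ C : Set X, IsClosed C → Function.Injective (cosecExtFromSub P C) := by
  haveI := hP
  have main : ∀ C : Set X, IsClosed C → Function.Injective (cosecExtFromSub P C) := by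
    intro C hC
    rw [injective_iff_map_eq_zero]
    intro u hu
    set s : P ⟶ QData P := Projective.factorThru (𝟙 P) (epsilon P) with hs
    have hsplit : s ≫ epsilon P = 𝟙 P := Projective.factorThru_comp _ _
    set v : cosecGrp ((restr C).obj (QData P)) := cosecMap ((restr C).map s) u with hv
    have h1 : cosecExtFromSub (QData P) C v = 0 := by
      have := DFunLike.congr_fun (cosecExtFromSub_natural s C).symm u
      rw [AddMonoidHom.comp_apply, AddMonoidHom.comp_apply] at this
      rw [← hv] at this
      rw [this, hu, map_zero]
    have h2 : v = 0 := by
      rw [← rho_retraction P hC v, h1, map_zero]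
    have h3 : cosecMap ((restr C).map (epsilon P)) v = u := by
      rw [hv]
      have : cosecMap ((restr C).map (epsilon P)) (cosecMap ((restr C).map s) u)
          = ((cosecFunctor ↥C).map ((restr C).map s) ≫
              (cosecFunctor ↥C).map ((restr C).map (epsilon P))) u := rfl
      rw [this, ← CategoryTheory.Functor.map_comp, ← CategoryTheory.Functor.map_comp, hsplit,
        CategoryTheory.Functor.map_id, CategoryTheory.Functor.map_id]
      rfl
    rw [← h3, h2, map_zero]
  exact ⟨main, main⟩
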